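/- Let a_i ∈ Act for each i < n. If □_{i<n} a_i.p_i is injective in prefixes (the a_i are pairwise distinct), then (□_{i<n} a_i.p_i) ∧ (□_{i<n} a_i.q_i) ⊑_RS □_{i<n} a_i.(p_i ∧ q_i). -/

import Mathlib

open Classical

/-- Visible actions plus the invisible action τ. -/
inductive ActT (Act : Type) : Type where
  | act : Act → ActT Act
  | tau : ActT Act

/-- Processes of the recursion-free calculus CLL. -/
inductive Proc (Act : Type) : Type where
  | nil  : Proc Act                                -- 0
  | bot  : Proc Act                                -- ⊥
  | pre  : ActT Act → Proc Act → Proc Act          -- α.t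
  | ec   : Proc Act → Proc Act → Proc Act          -- t □ t
  | conj : Proc Act → Proc Act → Proc Act          -- t ∧ t
  | disj : Proc Act → Proc Act → Proc Act          -- t ∨ t
  | par  : Set Act → Proc Act → Proc Act → Proc Act -- t ∥_A t

namespace Proc

variable {Act : Type}

/-- Whether a process has a τ-transition (structural stratification used for
the negative premises of the SOS rules). -/
def hasTau : Proc Act → Prop
  | nil => False
  | bot => False
  | pre a _ => a = ActT.tau
  | ec t₁ t₂ => hasTau t₁ ∨ hasTau t₂
  | conj t₁ t₂ => hasTau t₁ ∨ hasTau t₂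
  | disj _ _ => True
  | par _ t₁ t₂ => hasTau t₁ ∨ hasTau t₂

/-- The transition relation, given by the SOS rules of CLL_R. -/
inductive Trans : Proc Act → ActT Act → Proc Act → Prop where
  | pre : Trans (pre α t) α t
  | ecL : Trans t₁ (ActT.act a) t₁' → ¬ hasTau t₂ →
      Trans (ec t₁ t₂) (ActT.act a) t₁'
  | ecR : ¬ hasTau t₁ → Trans t₂ (ActT.act a) t₂' →
      Trans (ec t₁ t₂) (ActT.act a) t₂'
  | ecTauL : Trans t₁ ActT.tau t₁' → Trans (ec t₁ t₂) ActT.tau (ec t₁' t₂)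
  | ecTauR : Trans t₂ ActT.tau t₂' → Trans (ec t₁ t₂) ActT.tau (ec t₁ t₂')
  | conjAct : Trans t₁ (ActT.act a) t₁' → Trans t₂ (ActT.act a) t₂' →
      Trans (conj t₁ t₂) (ActT.act a) (conj t₁' t₂')
  | conjTauL : Trans t₁ ActT.tau t₁' → Trans (conj t₁ t₂) ActT.tau (conj t₁' t₂)
  | conjTauR : Trans t₂ ActT.tau t₂' → Trans (conj t₁ t₂) ActT.tau (conj t₁ t₂')
  | disjL : Trans (disj t₁ t₂) ActT.tau t₁
  | disjR : Trans (disj t₁ t₂) ActT.tau t₂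
  | parTauL : Trans t₁ ActT.tau t₁' → Trans (par A t₁ t₂) ActT.tau (par A t₁' t₂)
  | parTauR : Trans t₂ ActT.tau t₂' → Trans (par A t₁ t₂) ActT.tau (par A t₁ t₂')
  | parL : a ∉ A → Trans t₁ (ActT.act a) t₁' → ¬ hasTau t₂ →
      Trans (par A t₁ t₂) (ActT.act a) (par A t₁' t₂)
  | parR : a ∉ A → ¬ hasTau t₁ → Trans t₂ (ActT.act a) t₂' →
      Trans (par A t₁ t₂) (ActT.act a) (par A t₁ t₂')
  | parSync : a ∈ A → Trans t₁ (ActT.act a) t₁' → Trans t₂ (ActT.act a) t₂' →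
      Trans (par A t₁ t₂) (ActT.act a) (par A t₁' t₂')

/-- The ready set I(p). -/
def ready (p : Proc Act) : Set (ActT Act) := {α | ∃ q, Trans p α q}

/-- p is stable if it has no τ-transition. -/
def Stable (p : Proc Act) : Prop := ∀ q, ¬ Trans p ActT.tau q

/-- The inconsistency predicate F, as the least predicate closed under the
predicative rules of CLL_R. -/
inductive Fp : Proc Act → Prop where
  | bot : Fp bot
  | pre : Fp t → Fp (pre α t)
  | disj : Fp t₁ → Fp t₂ → Fp (disj t₁ t₂)
  | ecL : Fp t₁ → Fp (ec t₁ t₂)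
  | ecR : Fp t₂ → Fp (ec t₁ t₂)
  | parL : Fp t₁ → Fp (par A t₁ t₂)
  | parR : Fp t₂ → Fp (par A t₁ t₂)
  | conjL : Fp t₁ → Fp (conj t₁ t₂)
  | conjR : Fp t₂ → Fp (conj t₁ t₂)
  | conjReady : Stable (conj t₁ t₂) → ready t₁ ≠ ready t₂ → Fp (conj t₁ t₂)
  | conjSucc : Trans (conj t₁ t₂) α s → (∀ y, Trans (conj t₁ t₂) α y → Fp y) →
      Fp (conj t₁ t₂)
  | conjStable :
      (∀ y, Relation.ReflTransGen (fun x z => Trans x ActT.tau z) (conj t₁ t₂) y →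
        Stable y → Fp y) →
      Fp (conj t₁ t₂)

/-- One τ-step with both endpoints consistent. -/
def tauStepF (p q : Proc Act) : Prop := Trans p ActT.tau q ∧ ¬ Fp p ∧ ¬ Fp q

/-- p ⇒_F| q : a sequence of τ-transitions from p to q, all states outside F,
with q stable. -/
def epsF (p q : Proc Act) : Prop :=
  Relation.ReflTransGen tauStepF p q ∧ ¬ Fp p ∧ ¬ Fp q ∧ Stable q

/-- p =a⇒_F| q. -/
def wkF (a : Act) (p q : Proc Act) : Prop :=
  ∃ r s, Relation.ReflTransGen tauStepF p r ∧ ¬ Fp p ∧ ¬ Fp r ∧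
    Trans r (ActT.act a) s ∧ ¬ Fp s ∧
    Relation.ReflTransGen tauStepF s q ∧ ¬ Fp q ∧ Stable q

/-- R is a stable ready simulation. -/
def StableRS (R : Proc Act → Proc Act → Prop) : Prop :=
  ∀ p q, R p q →
    Stable p ∧ Stable q ∧
    (¬ Fp p → ¬ Fp q) ∧
    (∀ a p', wkF a p p' → ∃ q', wkF a q q' ∧ R p' q') ∧
    (¬ Fp p → ready p = ready q)

/-- p ⊏̃_RS q. -/
def rsLT (p q : Proc Act) : Prop := ∃ R, StableRS R ∧ R p q

/-- p ⊑_RS q. -/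
def rsLE (p q : Proc Act) : Prop :=
  ∀ p', epsF p p' → ∃ q', epsF q q' ∧ rsLT p' q'

/-- p =_RS q. -/
def rsEq (p q : Proc Act) : Prop := rsLE p q ∧ rsLE q p

/-- Basic process terms T(Σ_B): no ⊥ and no ∧. -/
inductive Basic : Proc Act → Prop where
  | nil : Basic nil
  | pre : Basic t → Basic (pre α t)
  | disj : Basic t₁ → Basic t₂ → Basic (disj t₁ t₂)
  | ec : Basic t₁ → Basic t₂ → Basic (ec t₁ t₂)
  | par : Basic t₁ → Basic t₂ → Basic (par A t₁ t₂)

/-- General external choice □ over a finite sequence (left-nested). -/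
def ecList : List (Proc Act) → Proc Act
  | [] => nil
  | t :: ts => ts.foldl ec t

/-- General disjunction ⋁ over a nonempty finite sequence (left-nested). -/
def djList : List (Proc Act) → Proc Act
  | [] => bot
  | t :: ts => ts.foldl disj t

/-- □_{i<n} a_i.t_i for a sequence of prefixed terms. -/
def ecPre (l : List (Act × Proc Act)) : Proc Act :=
  ecList (l.map fun x => pre (ActT.act x.1) x.2)

/-- The expansion term E = ((□Ω₁) □ (□Ω₂)) □ (□Ω₃). -/
noncomputable def expTerm (A : Set Act) (l₁ l₂ : List (Act × Proc Act)) : Proc Act :=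
  ec (ec
      (ecList ((l₁.filter fun x => decide (x.1 ∉ A)).map
        fun x => pre (ActT.act x.1) (par A x.2 (ecPre l₂))))
      (ecList ((l₂.filter fun x => decide (x.1 ∉ A)).map
        fun x => pre (ActT.act x.1) (par A (ecPre l₁) x.2))))
    (ecList (l₁.flatMap fun x =>
      (l₂.filter fun y => decide (y.1 = x.1 ∧ x.1 ∈ A)).map
        fun y => pre (ActT.act x.1) (par A x.2 y.2)))

/-- Normal forms NF_B. -/
inductive NFB : Proc Act → Prop where
  | mk (ls : List (List (Act × Proc Act))) (hne : ls ≠ [])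
      (hnodup : ∀ l ∈ ls, (l.map Prod.fst).Nodup)
      (hsub : ∀ l ∈ ls, ∀ x ∈ l, NFB x.2) :
      NFB (djList (ls.map ecPre))

/-- NF = NF_B ∪ {⊥}. -/
def NF (p : Proc Act) : Prop := NFB p ∨ p = bot

/-- Derivability ⊢ t ≤ t' in the proof system AX_CLL. -/
inductive Deriv : Proc Act → Proc Act → Prop where
  | refl (t) : Deriv t t
  | trans : Deriv t t' → Deriv t' t'' → Deriv t t''
  | mono_pre : Deriv t t' → Deriv (pre α t) (pre α t')
  | mono_ec : Deriv s s' → Deriv t t' → Deriv (ec s t) (ec s' t')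
  | mono_conj : Deriv s s' → Deriv t t' → Deriv (conj s t) (conj s' t')
  | mono_disj : Deriv s s' → Deriv t t' → Deriv (disj s t) (disj s' t')
  | mono_par : Deriv s s' → Deriv t t' → Deriv (par A s t) (par A s' t')
  -- external choice
  | ec_comm : Deriv (ec x y) (ec y x)
  | ec_assoc₁ : Deriv (ec (ec x y) z) (ec x (ec y z))
  | ec_assoc₂ : Deriv (ec x (ec y z)) (ec (ec x y) z)
  | ec_idem₁ : Deriv (ec x x) x
  | ec_idem₂ : Deriv x (ec x x)
  | ec_nil₁ : Deriv (ec x nil) x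
  | ec_nil₂ : Deriv x (ec x nil)
  | ec_bot₁ : Deriv (ec x bot) bot
  | ec_bot₂ : Deriv bot (ec x bot)
  -- disjunction
  | disj_comm : Deriv (disj x y) (disj y x)
  | disj_assoc₁ : Deriv (disj x (disj y z)) (disj (disj x y) z)
  | disj_assoc₂ : Deriv (disj (disj x y) z) (disj x (disj y z))
  | disj_idem₁ : Deriv (disj x x) x
  | disj_idem₂ : Deriv x (disj x x)
  | disj_bot₁ : Deriv (disj x bot) x
  | disj_bot₂ : Deriv x (disj x bot)
  | disj_le : Deriv x (disj x y)
  -- conjunction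
  | conj_comm : Deriv (conj x y) (conj y x)
  | conj_idem₁ : Deriv (conj x x) x
  | conj_idem₂ : Deriv x (conj x x)
  | conj_bot₁ : Deriv (conj x bot) bot
  | conj_bot₂ : Deriv bot (conj x bot)
  -- prefixing
  | pre_bot₁ : Deriv (pre (ActT.act a) bot) bot
  | pre_bot₂ : Deriv bot (pre (ActT.act a) bot)
  | tau_pre₁ : Deriv (pre ActT.tau x) x
  | tau_pre₂ : Deriv x (pre ActT.tau x)
  -- parallel
  | par_comm : Deriv (par A x y) (par A y x)
  | par_bot₁ : Deriv (par A x bot) bot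
  | par_bot₂ : Deriv bot (par A x bot)
  -- distribution over disjunction
  | ds_ec : Deriv (ec x (disj y z)) (disj (ec x y) (ec x z))
  | ds_conj : Deriv (conj x (disj y z)) (disj (conj x y) (conj x z))
  | ds_par : Deriv (par A x (disj y z)) (disj (par A x y) (par A x z))
  | ds_pre : Basic x → Basic y →
      Deriv (pre (ActT.act a) (disj x y)) (ec (pre (ActT.act a) x) (pre (ActT.act a) y))
  -- external choice and conjunction
  | ecc1₁ (l₁ l₂ : List (Act × Proc Act)) :
      {a | a ∈ l₁.map Prod.fst} ≠ {a | a ∈ l₂.map Prod.fst} →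
      Deriv (conj (ecPre l₁) (ecPre l₂)) bot
  | ecc1₂ (l₁ l₂ : List (Act × Proc Act)) :
      {a | a ∈ l₁.map Prod.fst} ≠ {a | a ∈ l₂.map Prod.fst} →
      Deriv bot (conj (ecPre l₁) (ecPre l₂))
  | ecc2 (l : List (Act × Proc Act × Proc Act)) :
      Deriv (ecPre (l.map fun x => (x.1, conj x.2.1 x.2.2)))
            (conj (ecPre (l.map fun x => (x.1, x.2.1)))
                  (ecPre (l.map fun x => (x.1, x.2.2))))
  | ecc3 (l : List (Act × Proc Act × Proc Act)) :
      (l.map Prod.fst).Nodup →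
      Deriv (conj (ecPre (l.map fun x => (x.1, x.2.1)))
                  (ecPre (l.map fun x => (x.1, x.2.2))))
            (ecPre (l.map fun x => (x.1, conj x.2.1 x.2.2)))
  -- expansion
  | exp1 (A : Set Act) (l₁ l₂ : List (Act × Proc Act)) :
      Deriv (par A (ecPre l₁) (ecPre l₂)) (expTerm A l₁ l₂)
  | exp2 (A : Set Act) (l₁ l₂ : List (Act × Proc Act)) :
      (∀ x ∈ l₁, Basic x.2) → (∀ x ∈ l₂, Basic x.2) →
      Deriv (expTerm A l₁ l₂) (par A (ecPre l₁) (ecPre l₂))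

end Proc

namespace Proc

variable {Act : Type}

lemma hasTau_of_tau : ∀ {p q : Proc Act} {α}, Trans p α q → α = ActT.tau → hasTau p := by
  intro p q α h
  induction h <;> intro hτ <;> simp_all [hasTau]

lemma stable_of_not_hasTau {p : Proc Act} (h : ¬ hasTau p) : Stable p :=
  fun _ ht => h (hasTau_of_tau ht rfl)

lemma not_hasTau_foldl {t : Proc Act} {L : List (Proc Act)} (ht : ¬ hasTau t)
    (hL : ∀ s ∈ L, ¬ hasTau s) : ¬ hasTau (L.foldl ec t) := by
  induction L generalizing t with
  | nil => exact ht
  | cons s L ih =>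
    exact ih (fun h => h.elim ht (hL s (List.mem_cons_self : s ∈ s :: L)))
      (fun x hx => hL x (List.mem_cons_of_mem _ hx))

lemma not_hasTau_ecPre (l : List (Act × Proc Act)) : ¬ hasTau (ecPre l) := by
  cases l with
  | nil => simp [ecPre, ecList, hasTau]
  | cons x xs =>
    simp only [ecPre, List.map_cons, ecList]
    exact not_hasTau_foldl (by simp [hasTau]) (by
      intro s hs
      simp only [List.mem_map] at hs
      obtain ⟨y, _, rfl⟩ := hs
      simp [hasTau])

lemma trans_pre_iff {α β : ActT Act} {t u : Proc Act} :
    Trans (pre α t) β u ↔ β = α ∧ u = t := by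
  constructor
  · intro h; cases h; exact ⟨rfl, rfl⟩
  · rintro ⟨rfl, rfl⟩; exact Trans.pre

lemma trans_ec_iff {t s : Proc Act} (ht : ¬ hasTau t) (hs : ¬ hasTau s) {a : Act} {u} :
    Trans (ec t s) (ActT.act a) u ↔ Trans t (ActT.act a) u ∨ Trans s (ActT.act a) u := by
  constructor
  · intro h
    cases h with
    | ecL h _ => exact Or.inl h
    | ecR _ h => exact Or.inr h
  · rintro (h | h)
    exacts [Trans.ecL h hs, Trans.ecR ht h]

lemma trans_foldl_iff {t : Proc Act} {L : List (Proc Act)} (ht : ¬ hasTau t)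
    (hL : ∀ s ∈ L, ¬ hasTau s) {a : Act} {u} :
    Trans (L.foldl ec t) (ActT.act a) u ↔
      Trans t (ActT.act a) u ∨ ∃ s ∈ L, Trans s (ActT.act a) u := by
  induction L generalizing t with
  | nil => simp
  | cons s L ih =>
    have hs := hL s (List.mem_cons_self : s ∈ s :: L)
    have h2 := ih (t := ec t s) (fun h => h.elim ht hs)
      (fun x hx => hL x (List.mem_cons_of_mem _ hx))
    simp only [List.foldl_cons] at *
    rw [h2, trans_ec_iff ht hs]
    simp only [List.mem_cons]
    constructor
    · rintro ((h | h) | ⟨x, hx, h⟩)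
      · exact Or.inl h
      · exact Or.inr ⟨s, Or.inl rfl, h⟩
      · exact Or.inr ⟨x, Or.inr hx, h⟩
    · rintro (h | ⟨x, (rfl | hx), h⟩)
      · exact Or.inl (Or.inl h)
      · exact Or.inl (Or.inr h)
      · exact Or.inr ⟨x, hx, h⟩

lemma trans_ecPre_iff {l : List (Act × Proc Act)} {a : Act} {u : Proc Act} :
    Trans (ecPre l) (ActT.act a) u ↔ (a, u) ∈ l := by
  cases l with
  | nil =>
    simp only [ecPre, List.map_nil, ecList, List.not_mem_nil, iff_false]
    intro h; cases h
  | cons x xs =>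
    simp only [ecPre, List.map_cons, ecList]
    rw [trans_foldl_iff (by simp [hasTau]) (by
      intro s hs
      simp only [List.mem_map] at hs
      obtain ⟨y, _, rfl⟩ := hs
      simp [hasTau])]
    simp only [trans_pre_iff, List.mem_map, List.mem_cons, ActT.act.injEq, Prod.ext_iff]
    constructor
    · rintro (⟨rfl, rfl⟩ | ⟨s, ⟨y, hy, rfl⟩, rfl, rfl⟩)
      · exact Or.inl ⟨rfl, rfl⟩
      · exact Or.inr hy
    · rintro (⟨h1, h2⟩ | h)
      · exact Or.inl ⟨h1.symm ▸ rfl, h2⟩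
      · exact Or.inr ⟨pre (ActT.act a) u, ⟨(a, u), h, rfl⟩, Trans.pre⟩

lemma fp_ec_elim {t s : Proc Act} (h : Fp (ec t s)) : Fp t ∨ Fp s := by
  cases h with
  | ecL h => exact Or.inl h
  | ecR h => exact Or.inr h

lemma fp_pre_elim {α : ActT Act} {t : Proc Act} (h : Fp (pre α t)) : Fp t := by
  cases h; assumption

lemma fp_foldl_elim {t : Proc Act} {L : List (Proc Act)} (h : Fp (L.foldl ec t)) :
    Fp t ∨ ∃ s ∈ L, Fp s := by
  induction L generalizing t with
  | nil => exact Or.inl h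
  | cons s L ih =>
    rcases ih h with h' | ⟨x, hx, h'⟩
    · rcases fp_ec_elim h' with h'' | h''
      · exact Or.inl h''
      · exact Or.inr ⟨s, (List.mem_cons_self : s ∈ s :: L), h''⟩
    · exact Or.inr ⟨x, List.mem_cons_of_mem _ hx, h'⟩

lemma fp_ecPre_elim {l : List (Act × Proc Act)} (h : Fp (ecPre l)) :
    ∃ x ∈ l, Fp x.2 := by
  cases l with
  | nil => exact absurd h (by intro h; cases h)
  | cons x xs =>
    simp only [ecPre, List.map_cons, ecList] at h
    rcases fp_foldl_elim h with h' | ⟨s, hs, h'⟩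
    · exact ⟨x, (List.mem_cons_self : x ∈ x :: xs), fp_pre_elim h'⟩
    · simp only [List.mem_map] at hs
      obtain ⟨y, hy, rfl⟩ := hs
      exact ⟨y, List.mem_cons_of_mem _ hy, fp_pre_elim h'⟩

lemma rtg_eq_of_stable {p q : Proc Act} (hst : Stable p)
    (h : Relation.ReflTransGen tauStepF p q) : q = p := by
  rcases h.cases_head with h | ⟨c, hc, _⟩
  · exact h.symm
  · exact absurd hc.1 (hst c)

/-- With pairwise-distinct prefixes, the conjunction of external choices is
ready-simulated by the external choice of conjunctions. -/
theorem stmt11 {Act : Type} (l : List (Act × Proc Act × Proc Act))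
    (hinj : (l.map Prod.fst).Nodup) :
    rsLE (conj (ecPre (l.map fun x => (x.1, x.2.1)))
               (ecPre (l.map fun x => (x.1, x.2.2))))
         (ecPre (l.map fun x => (x.1, conj x.2.1 x.2.2))) := by
  set P := conj (ecPre (l.map fun x => (x.1, x.2.1)))
    (ecPre (l.map fun x => (x.1, x.2.2))) with hP
  set Q := ecPre (l.map fun x => (x.1, conj x.2.1 x.2.2)) with hQ
  have hstL : Stable (ecPre (l.map fun x : Act × Proc Act × Proc Act => (x.1, x.2.1))) :=
    stable_of_not_hasTau (not_hasTau_ecPre _)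
  have hstR : Stable (ecPre (l.map fun x : Act × Proc Act × Proc Act => (x.1, x.2.2))) :=
    stable_of_not_hasTau (not_hasTau_ecPre _)
  have hstP : Stable P := by
    rw [hP]
    exact stable_of_not_hasTau (fun h =>
      h.elim (not_hasTau_ecPre _) (not_hasTau_ecPre _))
  have hstQ : Stable Q := stable_of_not_hasTau (not_hasTau_ecPre _)
  have hkey : ∀ (a : Act) (y : Proc Act), Trans P (ActT.act a) y →
      ∃ x ∈ l, x.1 = a ∧ y = conj x.2.1 x.2.2 := by
    intro a y h
    rw [hP] at h
    cases h with
    | conjAct h1 h2 =>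
      rw [trans_ecPre_iff] at h1 h2
      simp only [List.mem_map, Prod.mk.injEq] at h1 h2
      obtain ⟨x1, hx1, he1, he1'⟩ := h1
      obtain ⟨x2, hx2, he2, he2'⟩ := h2
      have hfst : (Prod.fst x1 : Act) = Prod.fst x2 := by rw [he1, he2]
      have hxx : x1 = x2 := List.inj_on_of_nodup_map hinj hx1 hx2 hfst
      subst hxx
      exact ⟨x1, hx1, he1, by rw [he1', he2']⟩
  have hFQP : Fp Q → Fp P := by
    intro hFQ
    rw [hQ] at hFQ
    obtain ⟨y, hy, hFy⟩ := fp_ecPre_elim hFQ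
    simp only [List.mem_map] at hy
    obtain ⟨x, hx, rfl⟩ := hy
    rw [hP]
    refine Fp.conjSucc (α := ActT.act x.1) (s := conj x.2.1 x.2.2)
      (Trans.conjAct (trans_ecPre_iff.mpr (List.mem_map.mpr ⟨x, hx, rfl⟩))
        (trans_ecPre_iff.mpr (List.mem_map.mpr ⟨x, hx, rfl⟩))) ?_
    intro y hy
    obtain ⟨x', hx', hfst, rfl⟩ := hkey _ _ (hP ▸ hy)
    have hxx : x' = x := List.inj_on_of_nodup_map hinj hx' hx hfst
    subst hxx
    exact hFy
  have hready : ready P = ready Q := by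
    ext α
    simp only [ready, Set.mem_setOf_eq]
    constructor
    · rintro ⟨u, hu⟩
      cases α with
      | tau => exact absurd hu (hstP u)
      | act a =>
        obtain ⟨x, hx, rfl, rfl⟩ := hkey a u hu
        exact ⟨conj x.2.1 x.2.2,
          trans_ecPre_iff.mpr (List.mem_map.mpr ⟨x, hx, rfl⟩)⟩
    · rintro ⟨u, hu⟩
      cases α with
      | tau => exact absurd hu (hstQ u)
      | act a =>
        rw [hQ, trans_ecPre_iff] at hu
        simp only [List.mem_map, Prod.mk.injEq] at hu
        obtain ⟨x, hx, rfl, rfl⟩ := hu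
        refine ⟨conj x.2.1 x.2.2, ?_⟩
        rw [hP]
        exact Trans.conjAct (trans_ecPre_iff.mpr (List.mem_map.mpr ⟨x, hx, rfl⟩))
          (trans_ecPre_iff.mpr (List.mem_map.mpr ⟨x, hx, rfl⟩))
  have htrans : ∀ (a : Act) (p'' : Proc Act), wkF a P p'' →
      wkF a Q p'' ∧ Stable p'' := by
    intro a p'' hw
    obtain ⟨r, s, hPr, hnFP, hnFr, hrs, hnFs, hsp, hnFp, hstp⟩ := hw
    have hrP : r = P := rtg_eq_of_stable hstP hPr
    subst hrP
    obtain ⟨x, hx, rfl, rfl⟩ := hkey _ _ hrs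
    have hQs : Trans Q (ActT.act x.1) (conj x.2.1 x.2.2) := by
      rw [hQ]
      exact trans_ecPre_iff.mpr (List.mem_map.mpr ⟨x, hx, rfl⟩)
    have hnFQ : ¬ Fp Q := fun h => hnFP (hFQP h)
    exact ⟨⟨Q, conj x.2.1 x.2.2, Relation.ReflTransGen.refl, hnFQ, hnFQ,
      hQs, hnFs, hsp, hnFp, hstp⟩, hstp⟩
  intro p' hp'
  have heq : p' = P := rtg_eq_of_stable hstP hp'.1
  subst heq
  obtain ⟨-, hnFP, -, -⟩ := hp'
  have hnFQ : ¬ Fp Q := fun h => hnFP (hFQP h)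
  refine ⟨Q, ⟨Relation.ReflTransGen.refl, hnFQ, hnFQ, hstQ⟩, ?_⟩
  refine ⟨fun p q => (p = P ∧ q = Q) ∨ (p = q ∧ Stable p), ?_, Or.inl ⟨rfl, rfl⟩⟩
  intro p q hr
  rcases hr with ⟨rfl, rfl⟩ | ⟨rfl, hst⟩
  · refine ⟨hstP, hstQ, fun _ => hnFQ, ?_, fun _ => hready⟩
    intro a p'' hw
    obtain ⟨hw', hstp⟩ := htrans a p'' hw
    exact ⟨p'', hw', Or.inr ⟨rfl, hstp⟩⟩
  · refine ⟨hst, hst, id, ?_, fun _ => rfl⟩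
    intro a p'' hw
    obtain ⟨r, s, h1, h2, h3, h4, h5, h6, h7, hstp⟩ := hw
    exact ⟨p'', ⟨r, s, h1, h2, h3, h4, h5, h6, h7, hstp⟩, Or.inr ⟨rfl, hstp⟩⟩
end Proc
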